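/- Let n, m be positive integers and let f : ℝ^{n×m} → ℝ be continuously differentiable. Define ℓ(u, V, w) := f(diag(u) V diag(w)) for u ∈ ℝ^n, V ∈ ℝ^{n×m}, w ∈ ℝ^m. Suppose t ↦ (u(t), V(t), w(t)) is a differentiable curve on [0,T) following the gradient flow (u'(t), V'(t), w'(t)) = −∇ℓ(u(t), V(t), w(t)), and let Z(t) := diag(u(t)) V(t) diag(w(t)) and G(t) := ∇f(Z(t)) ∈ ℝ^{n×m} (the matrix of partial derivatives of f at Z(t)). Then at every time t such that u_i(t) ≠ 0 for all i and w_j(t) ≠ 0 for all j, one has Z'(t) = −ddiag(G Z^⊤) diag(u)^{-2} Z − diag(u)² G diag(w)² − Z diag(w)^{-2} ddiag(Z^⊤ G), where all quantities are evaluated at t, diag(v)^{±2} denotes the diagonal matrix with entries v_i^{±2}, and ddiag(M) denotes the diagonal matrix whose diagonal equals the diagonal of the square matrix M. -/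

import Mathlib

open Matrix

attribute [local instance] Matrix.normedAddCommGroup Matrix.normedSpace

/-- The product `diag(u) V diag(w)` associated to the parameter vector
`θ = (u, V, w)` of a 3-layer network with scalar input and output. -/
noncomputable def threeLayerLift (n m : ℕ)
    (θ : EuclideanSpace ℝ (Fin n ⊕ (Fin n × Fin m) ⊕ Fin m)) :
    Matrix (Fin n) (Fin m) ℝ :=
  Matrix.diagonal (fun i => θ (Sum.inl i)) *
    Matrix.of (fun i j => θ (Sum.inr (Sum.inl (i, j)))) *
      Matrix.diagonal (fun j => θ (Sum.inr (Sum.inr j)))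

/-- The right-hand side
`−ddiag(G Zᵀ) diag(u)⁻² Z − diag(u)² G diag(w)² − Z diag(w)⁻² ddiag(Zᵀ G)`. -/
noncomputable def threeLayerRHS (n m : ℕ) (Z G : Matrix (Fin n) (Fin m) ℝ)
    (u : Fin n → ℝ) (w : Fin m → ℝ) : Matrix (Fin n) (Fin m) ℝ :=
  -(Matrix.diagonal (fun i => (G * Zᵀ) i i) * Matrix.diagonal (fun i => (u i ^ 2)⁻¹) * Z)
    - Matrix.diagonal (fun i => u i ^ 2) * G * Matrix.diagonal (fun j => w j ^ 2)
    - Z * Matrix.diagonal (fun j => (w j ^ 2)⁻¹) * Matrix.diagonal (fun j => (Zᵀ * G) j j)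

lemma clm_matrix_apply {n m : ℕ} (φ : Matrix (Fin n) (Fin m) ℝ →L[ℝ] ℝ)
    (M : Matrix (Fin n) (Fin m) ℝ) :
    φ M = ∑ a, ∑ b, M a b * φ (Matrix.single a b 1) := by
  conv_lhs => rw [Matrix.matrix_eq_sum_single M]
  rw [map_sum]
  refine Finset.sum_congr rfl fun a _ => ?_
  rw [map_sum]
  refine Finset.sum_congr rfl fun b _ => ?_
  rw [show Matrix.single a b (M a b) = M a b • Matrix.single a b 1 by
    rw [Matrix.smul_single, smul_eq_mul, mul_one]]
  rw [_root_.map_smul]; rfl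

lemma lift_apply (n m : ℕ) (p : EuclideanSpace ℝ (Fin n ⊕ (Fin n × Fin m) ⊕ Fin m)) (i j) :
    threeLayerLift n m p i j
      = p (Sum.inl i) * p (Sum.inr (Sum.inl (i,j))) * p (Sum.inr (Sum.inr j)) := by
  simp [threeLayerLift, Matrix.mul_diagonal, Matrix.diagonal_mul]

noncomputable def liftD (n m : ℕ) (p : EuclideanSpace ℝ (Fin n ⊕ (Fin n × Fin m) ⊕ Fin m)) :
    EuclideanSpace ℝ (Fin n ⊕ (Fin n × Fin m) ⊕ Fin m) →L[ℝ] Matrix (Fin n) (Fin m) ℝ :=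
  ContinuousLinearMap.pi fun i => ContinuousLinearMap.pi fun j =>
    (p (Sum.inl i) * p (Sum.inr (Sum.inl (i,j)))) • EuclideanSpace.proj (Sum.inr (Sum.inr j))
    + p (Sum.inr (Sum.inr j)) •
        (p (Sum.inl i) • EuclideanSpace.proj (Sum.inr (Sum.inl (i,j)))
          + p (Sum.inr (Sum.inl (i,j))) • EuclideanSpace.proj (Sum.inl i))

lemma liftD_apply (n m : ℕ) (p v : EuclideanSpace ℝ (Fin n ⊕ (Fin n × Fin m) ⊕ Fin m))
    (i : Fin n) (j : Fin m) :
    liftD n m p v i j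
      = p (Sum.inl i) * p (Sum.inr (Sum.inl (i,j))) * v (Sum.inr (Sum.inr j))
        + p (Sum.inr (Sum.inr j)) * (p (Sum.inl i) * v (Sum.inr (Sum.inl (i,j)))
            + p (Sum.inr (Sum.inl (i,j))) * v (Sum.inl i)) := by
  rfl

lemma lift_hasFDerivAt (n m : ℕ) (p : EuclideanSpace ℝ (Fin n ⊕ (Fin n × Fin m) ⊕ Fin m)) :
    HasFDerivAt (threeLayerLift n m) (liftD n m p) p := by
  apply hasFDerivAt_pi'.2
  intro i
  rw [hasFDerivAt_pi']
  intro j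
  have h : ∀ a, HasFDerivAt (fun q : EuclideanSpace ℝ (Fin n ⊕ (Fin n × Fin m) ⊕ Fin m) => q a)
      (EuclideanSpace.proj (𝕜 := ℝ) a) p :=
    fun a => (EuclideanSpace.proj (𝕜 := ℝ) a).hasFDerivAt
  have := ((h (Sum.inl i)).mul (h (Sum.inr (Sum.inl (i,j))))).mul (h (Sum.inr (Sum.inr j)))
  exact this.congr_of_eventuallyEq (Filter.Eventually.of_forall fun q => lift_apply n m q i j)

lemma grad_coord (n m : ℕ) (f : Matrix (Fin n) (Fin m) ℝ → ℝ) (hf : ContDiff ℝ 1 f)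
    (p : EuclideanSpace ℝ (Fin n ⊕ (Fin n × Fin m) ⊕ Fin m))
    (e : Fin n ⊕ (Fin n × Fin m) ⊕ Fin m) :
    gradient (fun q => f (threeLayerLift n m q)) p e
      = fderiv ℝ f (threeLayerLift n m p) (liftD n m p (EuclideanSpace.single e 1)) := by
  have hd : HasFDerivAt (fun q => f (threeLayerLift n m q))
      ((fderiv ℝ f (threeLayerLift n m p)).comp (liftD n m p)) p :=
    ((hf.differentiable one_ne_zero) (threeLayerLift n m p)).hasFDerivAt.comp p
      (lift_hasFDerivAt n m p)
  have h1 : gradient (fun q => f (threeLayerLift n m q)) p e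
      = @inner ℝ _ _ (gradient (fun q => f (threeLayerLift n m q)) p)
          (EuclideanSpace.single e (1:ℝ)) := by
    rw [EuclideanSpace.inner_single_right]; simp
  rw [h1, gradient, InnerProductSpace.toDual_symm_apply, hd.fderiv]
  rfl

theorem threeLayer_intrinsic_dynamics
    (n m : ℕ) (hn : 0 < n) (hm : 0 < m)
    (f : Matrix (Fin n) (Fin m) ℝ → ℝ) (hf : ContDiff ℝ 1 f)
    (T : ℝ) (hT : 0 < T)
    (θ : ℝ → EuclideanSpace ℝ (Fin n ⊕ (Fin n × Fin m) ⊕ Fin m))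
    (hflow : ∀ t ∈ Set.Ico (0 : ℝ) T,
      HasDerivWithinAt θ
        (-(gradient (fun p => f (threeLayerLift n m p)) (θ t)))
        (Set.Ico (0 : ℝ) T) t) :
    ∀ t ∈ Set.Ico (0 : ℝ) T,
      (∀ i : Fin n, θ t (Sum.inl i) ≠ 0) →
      (∀ j : Fin m, θ t (Sum.inr (Sum.inr j)) ≠ 0) →
      ∀ (i : Fin n) (j : Fin m),
        HasDerivWithinAt (fun s => threeLayerLift n m (θ s) i j)
          (threeLayerRHS n m (threeLayerLift n m (θ t))
            (Matrix.of fun a b =>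
              fderiv ℝ f (threeLayerLift n m (θ t)) (Matrix.single a b 1))
            (fun i => θ t (Sum.inl i)) (fun j => θ t (Sum.inr (Sum.inr j))) i j)
          (Set.Ico (0 : ℝ) T) t := by
  intro t ht hu hw i j
  set p := θ t with hp
  set G : Matrix (Fin n) (Fin m) ℝ :=
    Matrix.of fun a b => fderiv ℝ f (threeLayerLift n m p) (Matrix.single a b 1) with hG
  -- coordinate derivatives
  have hcoord : ∀ e, HasDerivWithinAt (fun s => θ s e)
      (-(gradient (fun q => f (threeLayerLift n m q)) p e)) (Set.Ico (0 : ℝ) T) t := by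
    intro e
    have h2 := (EuclideanSpace.proj (𝕜 := ℝ) e).hasFDerivAt.comp_hasDerivWithinAt t (hflow t ht)
    simp at h2; exact h2
  have hprod := ((hcoord (Sum.inl i)).mul (hcoord (Sum.inr (Sum.inl (i,j))))).mul
    (hcoord (Sum.inr (Sum.inr j)))
  have hfun : (fun s => threeLayerLift n m (θ s) i j)
      = fun s => θ s (Sum.inl i) * θ s (Sum.inr (Sum.inl (i,j))) * θ s (Sum.inr (Sum.inr j)) :=
    funext fun s => lift_apply n m (θ s) i j
  rw [hfun]
  refine hprod.congr_deriv ?_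
  symm
  simp only [Pi.mul_apply]
  -- now a pure algebra goal
  have hg1 : gradient (fun q => f (threeLayerLift n m q)) p (Sum.inl i)
      = ∑ b, p (Sum.inr (Sum.inl (i, b))) * p (Sum.inr (Sum.inr b)) * G i b := by
    rw [grad_coord n m f hf, clm_matrix_apply]
    simp [liftD_apply, EuclideanSpace.single_apply, mul_ite, ite_mul, zero_mul, mul_zero,
      Finset.sum_ite_eq, Finset.sum_ite_eq', hG, mul_comm]
  have hg2 : gradient (fun q => f (threeLayerLift n m q)) p (Sum.inr (Sum.inl (i, j)))
      = p (Sum.inl i) * p (Sum.inr (Sum.inr j)) * G i j := by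
    rw [grad_coord n m f hf, clm_matrix_apply]
    simp [liftD_apply, EuclideanSpace.single_apply, mul_ite, ite_mul, zero_mul, mul_zero,
      Finset.sum_ite_eq, Finset.sum_ite_eq', hG, mul_comm]
    rw [Finset.sum_eq_single i (fun b _ hb => by simp [hb]) (by simp),
        Finset.sum_eq_single j (fun b _ hb => by simp [hb]) (by simp)]
    simp
  have hg3 : gradient (fun q => f (threeLayerLift n m q)) p (Sum.inr (Sum.inr j))
      = ∑ a, p (Sum.inl a) * p (Sum.inr (Sum.inl (a, j))) * G a j := by
    rw [grad_coord n m f hf, clm_matrix_apply]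
    simp [liftD_apply, EuclideanSpace.single_apply, mul_ite, ite_mul, zero_mul, mul_zero,
      Finset.sum_ite_eq, Finset.sum_ite_eq', hG, mul_comm]
  rw [← hp, hg1, hg2, hg3]
  have eA : ∀ (d e : Fin n → ℝ) (M : Matrix (Fin n) (Fin m) ℝ),
      (Matrix.diagonal d * Matrix.diagonal e * M) i j = d i * e i * M i j := by
    intro d e M; simp [Matrix.diagonal_mul_diagonal, Matrix.diagonal_mul]
  have eB : ∀ (d : Fin n → ℝ) (e : Fin m → ℝ) (M : Matrix (Fin n) (Fin m) ℝ),
      (Matrix.diagonal d * M * Matrix.diagonal e) i j = d i * M i j * e j := by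
    intro d e M; simp [Matrix.mul_diagonal, Matrix.diagonal_mul]
  have eC : ∀ (d e : Fin m → ℝ) (M : Matrix (Fin n) (Fin m) ℝ),
      (M * Matrix.diagonal d * Matrix.diagonal e) i j = M i j * (d j * e j) := by
    intro d e M; simp [Matrix.diagonal_mul_diagonal, Matrix.mul_diagonal, mul_assoc]
  simp only [threeLayerRHS, Matrix.sub_apply, Matrix.neg_apply, eA, eB, eC]
  simp only [Matrix.mul_apply, Matrix.transpose_apply, lift_apply, Matrix.of_apply]
  have e1 : (∑ k, G i k * (p (Sum.inl i) * p (Sum.inr (Sum.inl (i, k))) * p (Sum.inr (Sum.inr k))))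
      = p (Sum.inl i) * ∑ b, p (Sum.inr (Sum.inl (i, b))) * p (Sum.inr (Sum.inr b)) * G i b := by
    rw [Finset.mul_sum]; exact Finset.sum_congr rfl fun k _ => by ring
  have e2 : (∑ k, p (Sum.inl k) * p (Sum.inr (Sum.inl (k, j))) * p (Sum.inr (Sum.inr j)) * G k j)
      = p (Sum.inr (Sum.inr j)) * ∑ a, p (Sum.inl a) * p (Sum.inr (Sum.inl (a, j))) * G a j := by
    rw [Finset.mul_sum]; exact Finset.sum_congr rfl fun k _ => by ring
  rw [e1, e2]
  have h1 := hu i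
  have h2 := hw j
  field_simp
  ring
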